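/- Let Σ be a finite symmetric generating set of ℤ² (Σ = −Σ, 0 ∉ Σ, and Σ generates ℤ²) with |Σ| ≥ 8. Then there exist elements g, h ∈ Σ with g ≠ h and g ≠ −h such that g + h ∉ Σ and g − h ∉ Σ. -/

import Mathlib

private def Q2 (x : ℤ × ℤ) : ℤ := x.1 ^ 2 + x.2 ^ 2
private def ip (g x : ℤ × ℤ) : ℤ := g.1 * x.1 + g.2 * x.2
private def cr (a b : ℤ × ℤ) : ℤ := a.1 * b.2 - a.2 * b.1

private lemma Q2_pos {x : ℤ × ℤ} (hx : x ≠ 0) : 0 < Q2 x := by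
  have h : x.1 ≠ 0 ∨ x.2 ≠ 0 := by
    by_contra hc
    push_neg at hc
    exact hx (Prod.ext_iff.mpr ⟨by simpa using hc.1, by simpa using hc.2⟩)
  unfold Q2
  rcases h with h | h
  · rcases Ne.lt_or_gt h with h | h <;> nlinarith [sq_nonneg x.2]
  · rcases Ne.lt_or_gt h with h | h <;> nlinarith [sq_nonneg x.1]

private lemma aux_eq {g x : ℤ × ℤ} (h2 : Q2 x ≤ Q2 g) (h3 : Q2 g ≤ ip g x) : x = g := by
  simp only [Q2, ip] at h2 h3
  have hz : (x.1 - g.1) ^ 2 + (x.2 - g.2) ^ 2 ≤ 0 := by nlinarith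
  have h1 : (x.1 - g.1) ^ 2 = 0 := by nlinarith [sq_nonneg (x.1 - g.1), sq_nonneg (x.2 - g.2)]
  have h2' : (x.2 - g.2) ^ 2 = 0 := by nlinarith [sq_nonneg (x.1 - g.1), sq_nonneg (x.2 - g.2)]
  have e1 : x.1 = g.1 := by nlinarith
  have e2 : x.2 = g.2 := by nlinarith
  exact Prod.ext_iff.mpr ⟨e1, e2⟩

private lemma ip_self (a : ℤ × ℤ) : ip a a = Q2 a := by unfold ip Q2; ring

private lemma ip_neg (g x : ℤ × ℤ) : ip g (-x) = -ip g x := by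
  unfold ip; simp only [Prod.fst_neg, Prod.snd_neg]; ring

private lemma ip_add (g a b : ℤ × ℤ) : ip g (a + b) = ip g a + ip g b := by
  unfold ip; simp only [Prod.fst_add, Prod.snd_add]; ring

private lemma ip_sub (g a b : ℤ × ℤ) : ip g (a - b) = ip g a - ip g b := by
  unfold ip; simp only [Prod.fst_sub, Prod.snd_sub]; ring

private lemma Q2_add (a b : ℤ × ℤ) : Q2 (a + b) = Q2 a + Q2 b + 2 * ip a b := by
  unfold Q2 ip; simp only [Prod.fst_add, Prod.snd_add]; ring

private lemma Q2_sub (a b : ℤ × ℤ) : Q2 (a - b) = Q2 a + Q2 b - 2 * ip a b := by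
  unfold Q2 ip; simp only [Prod.fst_sub, Prod.snd_sub]; ring

private lemma cr_add_left (a b c : ℤ × ℤ) : cr (a + b) c = cr a c + cr b c := by
  unfold cr; simp only [Prod.fst_add, Prod.snd_add]; ring

private lemma cr_sub_left (a b c : ℤ × ℤ) : cr (a - b) c = cr a c - cr b c := by
  unfold cr; simp only [Prod.fst_sub, Prod.snd_sub]; ring

private lemma cr_neg_left (a b : ℤ × ℤ) : cr (-a) b = -cr a b := by
  unfold cr; simp only [Prod.fst_neg, Prod.snd_neg]; ring

private lemma cr_self (a : ℤ × ℤ) : cr a a = 0 := by unfold cr; ring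

private lemma smul_coords (n : ℕ) (w : ℤ × ℤ) :
    n • w = ((n : ℤ) * w.1, (n : ℤ) * w.2) := by
  induction n with
  | zero => simp; rfl
  | succ n ih =>
    rw [succ_nsmul, ih]
    rw [Prod.ext_iff]
    constructor <;> · simp only [Prod.fst_add, Prod.snd_add] <;> push_cast <;> ring

private lemma cr_nsmul (n : ℕ) (a b : ℤ × ℤ) : cr (n • a) b = (n : ℤ) * cr a b := by
  rw [smul_coords]; unfold cr; simp only; ring

/-- If `S` is a finite symmetric generating set of `ℤ²` with `0 ∉ S` and `|S| ≥ 8`,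
then there are `g, h ∈ S` with `g ≠ ±h` such that neither `g + h` nor `g - h`
lies in `S`. -/
theorem exists_pair_sum_diff_not_mem (S : Finset (ℤ × ℤ))
    (hsym : ∀ v ∈ S, -v ∈ S) (h0 : (0 : ℤ × ℤ) ∉ S)
    (hgen : AddSubgroup.closure (S : Set (ℤ × ℤ)) = ⊤) (hcard : 8 ≤ S.card) :
    ∃ g ∈ S, ∃ h ∈ S, g ≠ h ∧ g ≠ -h ∧ g + h ∉ S ∧ g - h ∉ S := by
  by_contra hcon
  push_neg at hcon
  -- hcon : ∀ g ∈ S, ∀ h ∈ S, g ≠ h → g ≠ -h → g + h ∉ S → g - h ∈ S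
  have hSne : S.Nonempty := Finset.card_pos.mp (by omega)
  obtain ⟨g, hgS, hgmax⟩ := S.exists_max_image Q2 hSne
  have hQpos : ∀ x ∈ S, 0 < Q2 x := fun x hx => Q2_pos (fun he => h0 (he ▸ hx))
  have hQg : 0 < Q2 g := hQpos g hgS
  -- Lemma A : no element of S is orthogonal to g
  have hA : ∀ x ∈ S, ip g x ≠ 0 := by
    intro x hx h0x
    have hQx := hQpos x hx
    have hgx : g ≠ x := by
      rintro rfl
      rw [ip_self] at h0x
      omega
    have hgmx : g ≠ -x := by
      intro he
      rw [he] at h0x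
      rw [show ip (-x) x = -Q2 x by unfold ip Q2; simp only [Prod.fst_neg, Prod.snd_neg]; ring]
        at h0x
      omega
    have hsum : g + x ∉ S := by
      intro hm
      have hle := hgmax _ hm
      rw [Q2_add] at hle
      unfold ip at h0x
      unfold ip at hle
      omega
    have hd := hcon g hgS x hx hgx hgmx hsum
    have hle := hgmax _ hd
    rw [Q2_sub] at hle
    unfold ip at h0x hle
    omega
  -- Lemma B : strict Cauchy–Schwarz-style bound
  have hB : ∀ x ∈ S, x ≠ g → ip g x < Q2 g := by
    intro x hx hxg
    rcases lt_or_ge (ip g x) (Q2 g) with hlt | hle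
    · exact hlt
    · exact absurd (aux_eq (hgmax x hx) hle) hxg
  -- the halfspace H
  set H : Finset (ℤ × ℤ) := S.filter (fun x => 0 < ip g x) with hH
  have hmemH : ∀ x, x ∈ H ↔ x ∈ S ∧ 0 < ip g x := fun x => by
    rw [hH, Finset.mem_filter]
  have hcardH : 4 ≤ H.card := by
    have hsplit := Finset.card_filter_add_card_filter_not
      (s := S) (p := fun x => 0 < ip g x)
    have heq : S.filter (fun x => ¬0 < ip g x) = S.filter (fun x => ip g x < 0) := by
      apply Finset.filter_congr
      intro x hx
      have := hA x hx
      constructor <;> intro <;> omega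
    have hbij : (S.filter fun x => ip g x < 0).card = H.card := by
      apply Finset.card_bij (i := fun x _ => -x)
      · intro a ha
        rw [Finset.mem_filter] at ha
        exact (hmemH _).mpr ⟨hsym a ha.1, by rw [ip_neg]; omega⟩
      · intro a _ b _ hab
        exact neg_injective hab
      · intro b hb
        rw [hmemH] at hb
        refine ⟨-b, ?_, by simp⟩
        rw [Finset.mem_filter]
        exact ⟨hsym b hb.1, by rw [ip_neg]; omega⟩
    have hsplit2 : H.card + (S.filter fun x => ip g x < 0).card = S.card := by
      rw [hH, ← heq]; exact hsplit
    omega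
  have hgH : g ∈ H := (hmemH g).mpr ⟨hgS, by rw [ip_self]; exact hQg⟩
  have hH'ne : (H.erase g).Nonempty :=
    Finset.card_pos.mp (by rw [Finset.card_erase_of_mem hgH]; omega)
  obtain ⟨u, hu', humax⟩ := (H.erase g).exists_max_image (ip g) hH'ne
  obtain ⟨hug, huH⟩ := Finset.mem_erase.mp hu'
  obtain ⟨huS, htu⟩ := (hmemH u).mp huH
  have htu_lt : ip g u < Q2 g := hB u huS hug
  -- Lemma C : reflection in g
  have hC : ∀ x, x ∈ H → x ≠ g → g - x ∈ H ∧ g - x ≠ g := by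
    intro x hxH hxg
    obtain ⟨hxS, htx⟩ := (hmemH x).mp hxH
    have hQx := hQpos x hxS
    have hgx : g ≠ x := hxg.symm
    have hgmx : g ≠ -x := by
      intro he
      have : x = -g := by rw [he, neg_neg]
      rw [this, ip_neg, ip_self] at htx
      omega
    have hsum : g + x ∉ S := by
      intro hm
      have hle := hgmax _ hm
      rw [Q2_add] at hle
      omega
    have hd := hcon g hgS x hxS hgx hgmx hsum
    constructor
    · refine (hmemH _).mpr ⟨hd, ?_⟩
      rw [ip_sub, ip_self]
      have := hB x hxS hxg
      omega
    · intro he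
      exact h0 (sub_eq_self.mp he ▸ hxS)
  -- the set K
  set K : Finset (ℤ × ℤ) := ((H.erase g).erase u).erase (g - u) with hK
  have hmemK : ∀ k, k ∈ K ↔ k ≠ g - u ∧ k ≠ u ∧ k ≠ g ∧ k ∈ H := by
    intro k
    rw [hK, Finset.mem_erase, Finset.mem_erase, Finset.mem_erase]
  have hKcard : 1 ≤ K.card := by
    have c1 : (H.erase g).card = H.card - 1 := Finset.card_erase_of_mem hgH
    have c2 : ((H.erase g).erase u).card = (H.erase g).card - 1 :=
      Finset.card_erase_of_mem hu'
    have c3 := Finset.pred_card_le_card_erase (s := (H.erase g).erase u) (a := g - u)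
    rw [← hK] at c3
    omega
  -- Lemma D
  have hD : ∀ k ∈ K, u - k ∈ H ∧ u - k ≠ g ∧ u - k ≠ u := by
    intro k hk
    obtain ⟨hkgu, hku, hkg, hkH⟩ := (hmemK k).mp hk
    obtain ⟨hkS, htk⟩ := (hmemH k).mp hkH
    have hne1 : u ≠ k := hku.symm
    have hne2 : u ≠ -k := by
      intro he
      rw [he, ip_neg] at htu
      omega
    have hsum : u + k ∉ S := by
      intro hm
      have h1 : 0 < ip g (u + k) := by rw [ip_add]; omega
      have h2 : u + k ≠ g := by
        intro he
        exact hkgu (by linear_combination he)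
      have hmem' : u + k ∈ H.erase g :=
        Finset.mem_erase.mpr ⟨h2, (hmemH _).mpr ⟨hm, h1⟩⟩
      have := humax _ hmem'
      rw [ip_add] at this
      omega
    have hdS := hcon u huS k hkS hne1 hne2 hsum
    have htd : ip g (u - k) ≠ 0 := hA _ hdS
    have hle : ip g k ≤ ip g u := humax k (Finset.mem_erase.mpr ⟨hkg, hkH⟩)
    have htdpos : 0 < ip g (u - k) := by rw [ip_sub] at htd ⊢; omega
    refine ⟨(hmemH _).mpr ⟨hdS, htdpos⟩, ?_, ?_⟩
    · intro he
      have h1 : ip g (u - k) = Q2 g := by rw [he, ip_self]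
      rw [ip_sub] at h1
      omega
    · intro he
      exact h0 (sub_eq_self.mp he ▸ hkS)
  -- Lemma E
  have hE : ∀ k ∈ K, g - k ∈ K := by
    intro k hk
    obtain ⟨hkgu, hku, hkg, hkH⟩ := (hmemK k).mp hk
    obtain ⟨hm, hne⟩ := hC k hkH hkg
    refine (hmemK _).mpr ⟨?_, ?_, hne, hm⟩
    · intro he
      exact hku (by linear_combination -he)
    · intro he
      exact hkgu (by linear_combination -he)
  -- Lemma F : translation step
  have hF : ∀ k ∈ K, k ≠ (g - u) + (g - u) → k + (u - g) ∈ K := by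
    intro k hk hkex
    have hgk := hE k hk
    obtain ⟨hm, hne_g, hne_u⟩ := hD (g - k) hgk
    have heq : u - (g - k) = k + (u - g) := by ring
    rw [heq] at hm hne_g hne_u
    refine (hmemK _).mpr ⟨?_, hne_u, hne_g, hm⟩
    intro he
    exact hkex (by linear_combination he)
  -- every element of K is on the line through 0 with direction u - g
  have hw0 : (u - g) ≠ 0 := sub_ne_zero.mpr hug
  have hcrgu : cr ((g - u) + (g - u)) (u - g) = 0 := by
    rw [cr_add_left, show g - u = -(u - g) by ring, cr_neg_left, cr_self]
    ring
  have crw : ∀ k ∈ K, cr k (u - g) = 0 := by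
    intro k hk
    by_contra hcr
    have hall : ∀ n : ℕ, k + n • (u - g) ∈ K := by
      intro n
      induction n with
      | zero => simpa using hk
      | succ n ih =>
        have hcrn : cr (k + n • (u - g)) (u - g) = cr k (u - g) := by
          rw [cr_add_left, cr_nsmul, cr_self]; ring
        have hne : k + n • (u - g) ≠ (g - u) + (g - u) := by
          intro he
          apply hcr
          rw [← hcrn, he, hcrgu]
        have := hF _ ih hne
        have heq : (k + n • (u - g)) + (u - g) = k + (n + 1) • (u - g) := by
          rw [add_assoc, ← succ_nsmul]
        rwa [heq] at this
    have hmaps : ∀ n ∈ Finset.range (K.card + 1), k + n • (u - g) ∈ K :=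
      fun n _ => hall n
    obtain ⟨m, hm, n, hn, hmn, hfe⟩ :=
      Finset.exists_ne_map_eq_of_card_lt_of_maps_to
        (by rw [Finset.card_range]; omega) hmaps
    apply hmn
    have h1 : m • (u - g) = n • (u - g) := add_left_cancel hfe
    rw [smul_coords, smul_coords, Prod.ext_iff] at h1
    simp only at h1
    have hw : (u - g).1 ≠ 0 ∨ (u - g).2 ≠ 0 := by
      by_contra hc
      push_neg at hc
      exact hw0 (Prod.ext_iff.mpr ⟨by simpa using hc.1, by simpa using hc.2⟩)
    have : (m : ℤ) = (n : ℤ) := by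
      rcases hw with hw | hw
      · exact mul_right_cancel₀ hw h1.1
      · exact mul_right_cancel₀ hw h1.2
    exact_mod_cast this
  -- g, u, g - u are also on the line
  obtain ⟨k₀, hk₀⟩ := Finset.card_pos.mp (by omega : 0 < K.card)
  have hcrg : cr g (u - g) = 0 := by
    have h1 := crw k₀ hk₀
    have h2 := crw _ (hE k₀ hk₀)
    rw [cr_sub_left] at h2
    omega
  have hcru : cr u (u - g) = 0 := by
    have := cr_self (u - g)
    rw [cr_sub_left] at this
    omega
  have hallH : ∀ x ∈ H, cr x (u - g) = 0 := by
    intro x hxH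
    by_cases e1 : x = g
    · rw [e1]; exact hcrg
    by_cases e2 : x = u
    · rw [e2]; exact hcru
    by_cases e3 : x = g - u
    · rw [e3, cr_sub_left]; omega
    · exact crw x ((hmemK x).mpr ⟨e3, e2, e1, hxH⟩)
  have hallS : ∀ x ∈ S, cr x (u - g) = 0 := by
    intro x hx
    rcases Ne.lt_or_gt (hA x hx) with hn | hp
    · have hmx : -x ∈ H := (hmemH _).mpr ⟨hsym x hx, by rw [ip_neg]; omega⟩
      have := hallH _ hmx
      rw [cr_neg_left] at this
      omega
    · exact hallH x ((hmemH x).mpr ⟨hx, hp⟩)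
  -- conclude : S lies on a line, contradicting generation
  set φ : (ℤ × ℤ) →+ ℤ :=
    { toFun := fun x => cr x (u - g)
      map_zero' := by unfold cr; simp
      map_add' := fun a b => cr_add_left a b (u - g) } with hφ
  have hle : AddSubgroup.closure (S : Set (ℤ × ℤ)) ≤ φ.ker := by
    rw [AddSubgroup.closure_le]
    intro x hx
    exact AddMonoidHom.mem_ker.mpr (hallS x hx)
  rw [hgen] at hle
  have hm : ((-(u - g).2, (u - g).1) : ℤ × ℤ) ∈ φ.ker := hle trivial
  rw [AddMonoidHom.mem_ker] at hm
  have hfm : φ ((-(u - g).2, (u - g).1)) = -((u - g).1 ^ 2 + (u - g).2 ^ 2) := by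
    rw [hφ]
    show cr _ _ = _
    unfold cr
    ring
  rw [hfm] at hm
  have := Q2_pos hw0
  unfold Q2 at this
  omega
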